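/- Fix ρ ∈ (0,1). Define h(z) = (−ρ + 5(ρ−1)z³ + 5(ρ−1)z² + 15ρz + z + 1)/(16(−ρ+z+1)) for z ∈ [ρ/2, ρ]. Then h is non-decreasing on [ρ/2, ρ], and therefore sup_{z∈[ρ/2,ρ]} h(z) = h(ρ) = ((1+ρ)/2)^5 + ((1−ρ)/2)^5. -/
import Mathlib


noncomputable def h (ρ z : ℝ) : ℝ :=
  (-ρ + 5 * (ρ - 1) * z ^ 3 + 5 * (ρ - 1) * z ^ 2 + 15 * ρ * z + z + 1) /
    (16 * (-ρ + z + 1))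

/-- For `ρ ∈ (0,1)`, `h` is non-decreasing on `[ρ/2, ρ]`, so its supremum there is
`h(ρ) = ((1+ρ)/2)⁵ + ((1−ρ)/2)⁵`. -/
theorem stmt8 (ρ : ℝ) (hρ : ρ ∈ Set.Ioo (0 : ℝ) 1) :
    MonotoneOn (h ρ) (Set.Icc (ρ / 2) ρ) ∧
    (∀ z ∈ Set.Icc (ρ / 2) ρ, h ρ z ≤ h ρ ρ) ∧
    h ρ ρ = ((1 + ρ) / 2) ^ 5 + ((1 - ρ) / 2) ^ 5 := by
  obtain ⟨h0, h1⟩ := hρ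
  have mono : MonotoneOn (h ρ) (Set.Icc (ρ / 2) ρ) := by
    rintro a ⟨ha1, ha2⟩ b ⟨hb1, hb2⟩ hab
    have hda : (0:ℝ) < 16 * (-ρ + a + 1) := by nlinarith
    have hdb : (0:ℝ) < 16 * (-ρ + b + 1) := by nlinarith
    rw [h, h, div_le_div_iff₀ hda hdb]
    have ha0 : 0 ≤ a := by linarith
    have hb0 : 0 ≤ b := by linarith
    have hg : ρ * (1 - ρ)^2 ≤ 3*ρ - (1-ρ)*(a+b) - (1-ρ)*(a^2+b^2) - (2-ρ)*(a*b) - a*b*(a+b) := by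
      nlinarith [mul_nonneg (mul_nonneg (sub_nonneg.2 h1.le) (sub_nonneg.2 ha2)) (by linarith : (0:ℝ) ≤ ρ + a),
        mul_nonneg (mul_nonneg (sub_nonneg.2 h1.le) (sub_nonneg.2 hb2)) (by linarith : (0:ℝ) ≤ ρ + b),
        mul_nonneg (by linarith : (0:ℝ) ≤ 2 - ρ) (by nlinarith [mul_nonneg ha0 (sub_nonneg.2 hb2), mul_nonneg (sub_nonneg.2 ha2) h0.le] : (0:ℝ) ≤ ρ^2 - a*b),
        mul_nonneg (mul_nonneg ha0 hb0) (by linarith : (0:ℝ) ≤ ρ - a),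
        mul_nonneg (mul_nonneg ha0 hb0) (by linarith : (0:ℝ) ≤ ρ - b),
        mul_nonneg (mul_nonneg ha0 hb0) (by linarith : (0:ℝ) ≤ 2*ρ - a - b),
        mul_nonneg (mul_nonneg h0.le ha0) (sub_nonneg.2 hb2)]
    have hg0 : 0 ≤ 3*ρ - (1-ρ)*(a+b) - (1-ρ)*(a^2+b^2) - (2-ρ)*(a*b) - a*b*(a+b) := by
      nlinarith [sq_nonneg (1-ρ), h0.le]
    nlinarith [mul_nonneg (mul_nonneg (sub_nonneg.2 hab) (sub_nonneg.2 h1.le)) hg0]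
  refine ⟨mono, fun z hz => mono hz ⟨by linarith [hz.1, hz.2], le_refl ρ⟩ hz.2, ?_⟩
  have hd : (16 : ℝ) * (-ρ + ρ + 1) ≠ 0 := by norm_num
  rw [h, div_eq_iff hd]; ring
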